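/- arXiv:1401.4451 — 6 statements merged into one kernel-verified Lean document; each statement's English description precedes it below -/
import Mathlib

section
/- If a communication scheme is (1-ε)-hidable, i.e., for every message m and every observation x_W the ratio Pr(M=m | X_W = x_W)/Pr(M=m) lies in [1-ε, 1+ε], then the mutual information satisfies I(M; X_W) ≤ ε·H(M) + (1-ε)·log₂(1+ε). -/
open Finset Real

/-- Shannon entropy (in bits) of a pmf on a finite alphabet. -/
noncomputable def entropy {α : Type*} [Fintype α] (p : α → ℝ) : ℝ :=
  -∑ a, p a * Real.logb 2 (p a)

/-- Mutual information (in bits) computed from a joint pmf on `α × β`. -/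
noncomputable def mutualInfo {α β : Type*} [Fintype α] [Fintype β] (p : α × β → ℝ) : ℝ :=
  ∑ m : α, ∑ x : β,
    p (m, x) * Real.logb 2 (p (m, x) / ((∑ y, p (m, y)) * (∑ m', p (m', x))))

private lemma aux_qlogq {ε p q : ℝ} (hε0 : 0 < ε) (hε1 : ε < 1) (hp : 0 < p)
    (hq1 : q ≤ 1) (hlo : (1 - ε) * p ≤ q) (hhi : q ≤ (1 + ε) * p) :
    q * Real.logb 2 q ≤ (1 - ε) * (p * Real.logb 2 ((1 + ε) * p)) := by
  have hq0 : 0 < q := lt_of_lt_of_le (mul_pos (by linarith) hp) hlo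
  rcases le_or_gt ((1 + ε) * p) 1 with h | h
  · have h1 : Real.logb 2 q ≤ Real.logb 2 ((1 + ε) * p) :=
      Real.logb_le_logb_of_le one_lt_two hq0 hhi
    have h2 : Real.logb 2 ((1 + ε) * p) ≤ 0 :=
      Real.logb_nonpos one_lt_two (by positivity) h
    calc q * Real.logb 2 q ≤ q * Real.logb 2 ((1 + ε) * p) := by nlinarith
      _ ≤ (1 - ε) * p * Real.logb 2 ((1 + ε) * p) := by nlinarith
      _ = (1 - ε) * (p * Real.logb 2 ((1 + ε) * p)) := by ring
  · have h1 : q * Real.logb 2 q ≤ 0 :=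
      mul_nonpos_of_nonneg_of_nonpos hq0.le (Real.logb_nonpos one_lt_two hq0.le hq1)
    have h2 : 0 ≤ Real.logb 2 ((1 + ε) * p) := Real.logb_nonneg one_lt_two h.le
    have h3 : 0 ≤ (1 - ε) * (p * Real.logb 2 ((1 + ε) * p)) :=
      mul_nonneg (by linarith) (mul_nonneg hp.le h2)
    linarith

/-- If a scheme is `(1-ε)`-hidable, then
`I(M; X_W) ≤ ε·H(M) + (1-ε)·log₂(1+ε)`. -/
theorem stmt0 {M X : Type*} [Fintype M] [Fintype X]
    (p : M × X → ℝ) (ε : ℝ) (hε0 : 0 < ε) (hε1 : ε < 1)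
    (hp0 : ∀ z, 0 ≤ p z) (hp1 : ∑ z, p z = 1)
    (hM : ∀ m : M, 0 < ∑ x, p (m, x))
    (hid : ∀ (m : M) (x : X), 0 < (∑ m', p (m', x)) →
      1 - ε ≤ (p (m, x) / ∑ m', p (m', x)) / (∑ y, p (m, y)) ∧
      (p (m, x) / ∑ m', p (m', x)) / (∑ y, p (m, y)) ≤ 1 + ε) :
    mutualInfo p ≤ ε * entropy (fun m => ∑ x, p (m, x)) + (1 - ε) * Real.logb 2 (1 + ε) := by
  set pM : M → ℝ := fun m => ∑ x, p (m, x) with hpM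
  set pX : X → ℝ := fun x => ∑ m', p (m', x) with hpX
  have hpMpos : ∀ m, 0 < pM m := hM
  have hpXnn : ∀ x, 0 ≤ pX x := fun x => Finset.sum_nonneg fun _ _ => hp0 _
  have hsumM : ∑ m, pM m = 1 := by
    rw [← hp1, Fintype.sum_prod_type]
  have hsumX : ∑ x, pX x = 1 := by
    rw [← hp1, Fintype.sum_prod_type, Finset.sum_comm]
  -- key per-term bound
  have key : ∀ m x, p (m, x) * Real.logb 2 (p (m, x) / (pM m * pX x)) ≤
      p (m, x) * (-Real.logb 2 (pM m)) +
        (1 - ε) * (pX x * (pM m * Real.logb 2 ((1 + ε) * pM m))) := by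
    intro m x
    rcases (hpXnn x).eq_or_lt with h0 | hx
    · have hz : p (m, x) = 0 := by
        have h1 : p (m, x) ≤ pX x := Finset.single_le_sum (fun i _ => hp0 (i, x)) (Finset.mem_univ m)
        have := hp0 (m, x)
        linarith [h0 ▸ h1]
      rw [hz, ← h0]; simp
    · obtain ⟨hlo, hhi⟩ := hid m x hx
      set q : ℝ := p (m, x) / pX x with hq
      have hpmfold : (∑ y, p (m, y)) = pM m := rfl
      rw [hpmfold] at hlo hhi
      have hlo' : (1 - ε) * pM m ≤ q := by
        rw [le_div_iff₀ (hpMpos m)] at hlo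
        linarith [hlo]
      have hhi' : q ≤ (1 + ε) * pM m := by
        rw [div_le_iff₀ (hpMpos m)] at hhi
        linarith [hhi]
      have hq1 : q ≤ 1 := by
        rw [hq, div_le_one hx]
        exact Finset.single_le_sum (fun i _ => hp0 (i, x)) (Finset.mem_univ m)
      have hq0 : 0 < q := lt_of_lt_of_le (by have := hpMpos m; nlinarith) hlo'
      have hpmx : p (m, x) = q * pX x := by
        rw [hq, div_mul_cancel₀ _ (ne_of_gt hx)]
      have hsplit : Real.logb 2 (p (m, x) / (pM m * pX x)) =
          Real.logb 2 q - Real.logb 2 (pM m) := by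
        rw [show p (m, x) / (pM m * pX x) = q / pM m by rw [hq]; field_simp,
          Real.logb_div (ne_of_gt hq0) (ne_of_gt (hpMpos m))]
      rw [hsplit, hpmx]
      have haux := aux_qlogq hε0 hε1 (hpMpos m) hq1 hlo' hhi'
      have := mul_le_mul_of_nonneg_left haux (hpXnn x)
      nlinarith [this]
  have hsum : mutualInfo p ≤
      ∑ m, ∑ x, (p (m, x) * (-Real.logb 2 (pM m)) +
        (1 - ε) * (pX x * (pM m * Real.logb 2 ((1 + ε) * pM m)))) := by
    unfold mutualInfo
    exact Finset.sum_le_sum fun m _ => Finset.sum_le_sum fun x _ => key m x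
  have hlogsplit : ∀ m, Real.logb 2 ((1 + ε) * pM m) =
      Real.logb 2 (1 + ε) + Real.logb 2 (pM m) := fun m =>
    Real.logb_mul (by positivity) (ne_of_gt (hpMpos m))
  have hrhs : ∑ m, ∑ x, (p (m, x) * (-Real.logb 2 (pM m)) +
        (1 - ε) * (pX x * (pM m * Real.logb 2 ((1 + ε) * pM m)))) =
      ε * entropy pM + (1 - ε) * Real.logb 2 (1 + ε) := by
    have e1 : ∀ m, ∑ x, (p (m, x) * (-Real.logb 2 (pM m)) +
        (1 - ε) * (pX x * (pM m * Real.logb 2 ((1 + ε) * pM m)))) =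
        pM m * (-Real.logb 2 (pM m)) +
          (1 - ε) * (pM m * Real.logb 2 ((1 + ε) * pM m)) := by
      intro m
      rw [Finset.sum_add_distrib, ← Finset.sum_mul, ← Finset.mul_sum, ← Finset.sum_mul, hsumX]
      ring
    rw [Finset.sum_congr rfl fun m _ => e1 m, Finset.sum_add_distrib, ← Finset.mul_sum]
    have e2 : ∑ m, pM m * Real.logb 2 ((1 + ε) * pM m) =
        Real.logb 2 (1 + ε) + ∑ m, pM m * Real.logb 2 (pM m) := by
      rw [Finset.sum_congr rfl fun m _ => by rw [hlogsplit m, mul_add],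
        Finset.sum_add_distrib, ← Finset.sum_mul, hsumM, one_mul]
    rw [e2]
    unfold entropy
    simp only [mul_neg]
    rw [Finset.sum_neg_distrib]
    ring
  calc mutualInfo p ≤ _ := hsum
    _ = _ := hrhs
end

section
/- If a scheme is (1-ε)-hidable, then for every message m and observation x_W with positive probability, H(M | X_W = x_W) ≥ (1-ε)·H(M) - (1-ε)·log₂(1+ε). -/
open Finset Real

lemma key_ineq (ε a q : ℝ) (hε0 : 0 < ε) (hε1 : ε < 1) (ha : 0 < a)
    (hq1 : q ≤ 1) (hl : (1 - ε) * a ≤ q) (hu : q ≤ (1 + ε) * a) :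
    -(q * Real.logb 2 q) ≥
      (1 - ε) * (-(a * Real.logb 2 a)) - (1 - ε) * (a * Real.logb 2 (1 + ε)) := by
  have hq0 : 0 < q := lt_of_lt_of_le (by nlinarith) hl
  have h1ε : (0:ℝ) < 1 + ε := by linarith
  have hmul : Real.logb 2 ((1 + ε) * a) = Real.logb 2 (1 + ε) + Real.logb 2 a :=
    Real.logb_mul (ne_of_gt h1ε) (ne_of_gt ha)
  have hgoal : -(q * Real.logb 2 q) ≥ -((1 - ε) * a * Real.logb 2 ((1 + ε) * a)) := by
    rcases le_or_gt ((1 + ε) * a) 1 with h | h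
    · have hL : Real.logb 2 ((1 + ε) * a) ≤ 0 :=
        Real.logb_nonpos one_lt_two (by positivity) h
      have h2 : Real.logb 2 q ≤ Real.logb 2 ((1 + ε) * a) :=
        Real.logb_le_logb_of_le one_lt_two hq0 hu
      nlinarith [mul_le_mul_of_nonneg_right hl (neg_nonneg.mpr hL)]
    · have hL : 0 < Real.logb 2 ((1 + ε) * a) := Real.logb_pos one_lt_two h
      have h2 : Real.logb 2 q ≤ 0 := Real.logb_nonpos one_lt_two hq0.le hq1
      nlinarith [mul_nonpos_of_nonneg_of_nonpos hq0.le h2,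
        mul_nonneg (mul_nonneg (by linarith : (0:ℝ) ≤ 1 - ε) ha.le) hL.le]
  calc -(q * Real.logb 2 q) ≥ -((1 - ε) * a * Real.logb 2 ((1 + ε) * a)) := hgoal
    _ = (1 - ε) * (-(a * Real.logb 2 a)) - (1 - ε) * (a * Real.logb 2 (1 + ε)) := by
        rw [hmul]; ring

/-- If a scheme is `(1-ε)`-hidable, then for every observation `x_W` of positive
probability, `H(M | X_W = x_W) ≥ (1-ε)·H(M) - (1-ε)·log₂(1+ε)`. -/
theorem stmt1 {M X : Type*} [Fintype M] [Fintype X]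
    (p : M × X → ℝ) (ε : ℝ) (hε0 : 0 < ε) (hε1 : ε < 1)
    (hp0 : ∀ z, 0 ≤ p z) (hp1 : ∑ z, p z = 1)
    (hM : ∀ m : M, 0 < ∑ x, p (m, x))
    (hid : ∀ (m : M) (x : X), 0 < (∑ m', p (m', x)) →
      1 - ε ≤ (p (m, x) / ∑ m', p (m', x)) / (∑ y, p (m, y)) ∧
      (p (m, x) / ∑ m', p (m', x)) / (∑ y, p (m, y)) ≤ 1 + ε) :
    ∀ x : X, 0 < (∑ m', p (m', x)) →
      entropy (fun m => p (m, x) / ∑ m', p (m', x)) ≥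
        (1 - ε) * entropy (fun m => ∑ y, p (m, y)) - (1 - ε) * Real.logb 2 (1 + ε) := by
  intro x hx
  set P : ℝ := ∑ m', p (m', x) with hP
  set q : M → ℝ := fun m => p (m, x) / P with hq
  set a : M → ℝ := fun m => ∑ y, p (m, y) with ha
  have hsuma : ∑ m, a m = 1 := by
    rw [← hp1, Fintype.sum_prod_type]
  -- pointwise bounds
  have hq1 : ∀ m, q m ≤ 1 := by
    intro m
    have : p (m, x) ≤ P := Finset.single_le_sum (fun i _ => hp0 (i, x)) (mem_univ m)
    exact div_le_one_of_le₀ this hx.le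
  have hl : ∀ m, (1 - ε) * a m ≤ q m := by
    intro m
    exact (le_div_iff₀ (hM m)).mp (hid m x hx).1
  have hu : ∀ m, q m ≤ (1 + ε) * a m := by
    intro m
    exact (div_le_iff₀ (hM m)).mp (hid m x hx).2
  have hkey : ∀ m ∈ Finset.univ, (1 - ε) * (-(a m * Real.logb 2 (a m))) -
      (1 - ε) * (a m * Real.logb 2 (1 + ε)) ≤ -(q m * Real.logb 2 (q m)) :=
    fun m _ => key_ineq ε (a m) (q m) hε0 hε1 (hM m) (hq1 m) (hl m) (hu m)
  have hsum := Finset.sum_le_sum hkey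
  simp only [Finset.sum_sub_distrib, ← Finset.mul_sum, Finset.sum_neg_distrib] at hsum
  unfold entropy
  have hsum2 : ∑ m, a m * Real.logb 2 (1 + ε) = Real.logb 2 (1 + ε) := by
    rw [← Finset.sum_mul, hsuma, one_mul]
  rw [hsum2] at hsum
  linarith [hsum]
end

section
/- If P and Q are probability distributions on a finite alphabet X with total variation distance θ = (1/2)Σ|P(x)-Q(x)| satisfying 0 ≤ θ ≤ 1/4, then |H(P) - H(Q)| ≤ -2θ·log₂(2θ/|X|). -/
open Finset Real

-- subadditivity of negMulLog
lemma negMulLog_add_le {p d : ℝ} (hp : 0 ≤ p) (hd : 0 ≤ d) :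
    Real.negMulLog (p + d) ≤ Real.negMulLog p + Real.negMulLog d := by
  rcases eq_or_lt_of_le hd with rfl | hd'
  · simp
  have hpd : 0 < p + d := by linarith
  have h1 : -(p * Real.log (p + d)) ≤ -(p * Real.log p) := by
    rcases eq_or_lt_of_le hp with rfl | hp'
    · simp
    · have := Real.log_le_log hp' (by linarith : p ≤ p + d)
      nlinarith
  have h2 : -(d * Real.log (p + d)) ≤ -(d * Real.log d) := by
    have := Real.log_le_log hd' (by linarith : d ≤ p + d)
    nlinarith
  simp only [Real.negMulLog, neg_mul]
  nlinarith [h1, h2]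


lemma negMulLog_one_sub_le {d : ℝ} (hd : 0 ≤ d) (hd2 : d ≤ 1/2) :
    Real.negMulLog (1 - d) ≤ Real.negMulLog d := by
  set g : ℝ → ℝ := fun t => Real.negMulLog t - Real.negMulLog (1 - t) with hg
  -- derivative of g at t ∈ (0,1): -log t - 1 + (-log (1-t) - 1)
  have hderiv : ∀ t : ℝ, 0 < t → t < 1 →
      HasDerivAt g (-Real.log t - 1 + (-Real.log (1 - t) - 1)) t := by
    intro t ht ht1
    have h1 : HasDerivAt Real.negMulLog (-Real.log t - 1) t :=
      Real.hasDerivAt_negMulLog (ne_of_gt ht)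
    have hin : HasDerivAt (fun t : ℝ => 1 - t) (-1) t := by
      simpa using (hasDerivAt_id t).const_sub 1
    have h2 : HasDerivAt (fun t : ℝ => Real.negMulLog (1 - t))
        ((-Real.log (1 - t) - 1) * (-1)) t :=
      (Real.hasDerivAt_negMulLog (by intro h; rw [sub_eq_zero] at h; linarith)).comp t hin
    have := h1.sub h2
    exact this.congr_deriv (by ring)
  have hgcont : Continuous g := by
    have := Real.continuous_negMulLog
    fun_prop
  -- sign of derivative controlled by t(1-t) vs exp(-2)
  have hsign : ∀ t : ℝ, 0 < t → t < 1 →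
      (t * (1 - t) ≤ Real.exp (-2) → 0 ≤ deriv g t) ∧
      (Real.exp (-2) ≤ t * (1 - t) → deriv g t ≤ 0) := by
    intro t ht ht1
    have hd := (hderiv t ht ht1).deriv
    rw [hd]
    have hlog : Real.log (t * (1 - t)) = Real.log t + Real.log (1 - t) :=
      Real.log_mul (ne_of_gt ht) (by linarith)
    have hpos : 0 < t * (1 - t) := by nlinarith
    constructor
    · intro h
      have := (Real.log_le_iff_le_exp hpos).2 h
      rw [hlog] at this; linarith
    · intro h
      have := (Real.le_log_iff_exp_le hpos).2 h
      rw [hlog] at this; linarith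
  rcases eq_or_lt_of_le hd with rfl | hd0
  · simp [Real.negMulLog]
  -- t ↦ t(1-t) comparison: for t ≤ s ≤ 1/2, t(1-t) ≤ s(1-s)
  by_cases hc : d * (1 - d) ≤ Real.exp (-2)
  · -- g monotone on [0, d], g d ≥ g 0 = 0
    have hmono : MonotoneOn g (Set.Icc 0 d) := by
      apply monotoneOn_of_deriv_nonneg (convex_Icc 0 d) hgcont.continuousOn
      · intro t ht
        rw [interior_Icc] at ht
        exact ((hderiv t ht.1 (by linarith [ht.2])).differentiableAt).differentiableWithinAt
      · intro t ht
        rw [interior_Icc] at ht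
        refine ((hsign t ht.1 (by linarith [ht.2])).1 ?_)
        calc t * (1 - t) ≤ d * (1 - d) := by nlinarith [ht.1, ht.2]
          _ ≤ _ := hc
    have := hmono (Set.mem_Icc.2 ⟨le_refl 0, hd⟩) (Set.mem_Icc.2 ⟨hd, le_refl d⟩) hd
    have hg0 : g 0 = 0 := by simp [hg, Real.negMulLog]
    have hgd : 0 ≤ g d := by rw [hg0] at this; exact this
    simpa [hg, sub_nonneg] using hgd
  · push_neg at hc
    have hanti : AntitoneOn g (Set.Icc d (1/2)) := by
      apply antitoneOn_of_deriv_nonpos (convex_Icc d (1/2)) hgcont.continuousOn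
      · intro t ht
        rw [interior_Icc] at ht
        exact ((hderiv t (lt_trans hd0 ht.1) (by linarith [ht.2])).differentiableAt).differentiableWithinAt
      · intro t ht
        rw [interior_Icc] at ht
        refine ((hsign t (lt_trans hd0 ht.1) (by linarith [ht.2])).2 ?_)
        calc Real.exp (-2) ≤ d * (1 - d) := le_of_lt hc
          _ ≤ t * (1 - t) := by nlinarith [ht.1, ht.2]
    have := hanti (Set.mem_Icc.2 ⟨le_refl d, hd2⟩) (Set.mem_Icc.2 ⟨hd2, le_refl _⟩) hd2
    have hghalf : g (1/2) = 0 := by norm_num [hg]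
    have hgd : 0 ≤ g d := by rw [hghalf] at this; exact this
    simpa [hg, sub_nonneg] using hgd


-- concavity: F p ≤ F (p+d) + F (1-d) for 0 ≤ p, 0 ≤ d, p+d ≤ 1
lemma negMulLog_le_add {p d : ℝ} (hp : 0 ≤ p) (hd : 0 ≤ d) (hpd : p + d ≤ 1) :
    Real.negMulLog p ≤ Real.negMulLog (p + d) + Real.negMulLog (1 - d) := by
  rcases eq_or_lt_of_le (by linarith : p ≤ 1) with rfl | hp1
  · have hd0 : d = 0 := by linarith
    subst hd0
    simp
  set lam := d / (1 - p) with hlam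
  have h1p : 0 < 1 - p := by linarith
  have hl0 : 0 ≤ lam := div_nonneg hd (le_of_lt h1p)
  have hl1 : lam ≤ 1 := by rw [div_le_one h1p]; linarith
  have hcomb1 : (1 - lam) * p + lam * 1 = p + d := by
    rw [hlam]; field_simp; ring
  have hcomb2 : lam * p + (1 - lam) * 1 = 1 - d := by
    rw [hlam]; field_simp; ring
  have hF := Real.concaveOn_negMulLog
  have hA := hF.2 (Set.mem_Ici.2 hp) (Set.mem_Ici.2 (by norm_num : (0:ℝ) ≤ 1))
      (by linarith : 0 ≤ 1 - lam) hl0 (by ring)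
  have hB := hF.2 (Set.mem_Ici.2 hp) (Set.mem_Ici.2 (by norm_num : (0:ℝ) ≤ 1))
      hl0 (by linarith : 0 ≤ 1 - lam) (by ring)
  rw [smul_eq_mul, smul_eq_mul, smul_eq_mul, smul_eq_mul] at hA hB
  rw [hcomb1] at hA
  rw [hcomb2] at hB
  simp only [Real.negMulLog_one, mul_one] at hA hB
  nlinarith [hA, hB]

lemma abs_negMulLog_sub {p q : ℝ} (hp : 0 ≤ p) (hp1 : p ≤ 1) (hq : 0 ≤ q) (hq1 : q ≤ 1)
    (h : |p - q| ≤ 1/2) :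
    |Real.negMulLog p - Real.negMulLog q| ≤ Real.negMulLog |p - q| := by
  -- wlog p ≤ q
  have key : ∀ a b : ℝ, 0 ≤ a → b ≤ 1 → a ≤ b → b - a ≤ 1/2 →
      |Real.negMulLog a - Real.negMulLog b| ≤ Real.negMulLog (b - a) := by
    intro a b ha hb1 hab hd2
    set d := b - a with hdd
    have hd : 0 ≤ d := by linarith
    rw [abs_le]
    constructor
    · -- -(F d) ≤ F a - F b  ⟺  F b ≤ F a + F d : subadditivity, b = a + d
      have := negMulLog_add_le ha hd
      have hba : a + d = b := by ring
      rw [hba] at this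
      linarith
    · -- F a - F b ≤ F d: F a ≤ F (a+d) + F (1-d) ≤ F b + F d
      have h1 := negMulLog_le_add ha hd (by rw [hdd]; linarith)
      have hba : a + d = b := by ring
      rw [hba] at h1
      have h2 := negMulLog_one_sub_le hd hd2
      linarith
  rcases le_total p q with hpq | hpq
  · have : |p - q| = q - p := by rw [abs_sub_comm]; exact abs_of_nonneg (by linarith)
    rw [this]
    exact key p q hp hq1 hpq (by rw [this] at h; exact h)
  · have : |p - q| = p - q := abs_of_nonneg (by linarith)
    rw [this, abs_sub_comm]
    exact key q p hq hp1 hpq (by rw [this] at h; exact h)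


section Aux

lemma entropy_eq_sum_negMulLog {α : Type*} [Fintype α] (p : α → ℝ) :
    (-∑ a, p a * Real.logb 2 (p a)) = (∑ a, Real.negMulLog (p a)) / Real.log 2 := by
  rw [Finset.sum_div, ← Finset.sum_neg_distrib]
  congr 1
  ext a
  rw [Real.negMulLog, Real.logb]
  ring

lemma jensen_negMulLog {α : Type*} [Fintype α] (hcard : 1 ≤ Fintype.card α)
    (d : α → ℝ) (hd : ∀ x, 0 ≤ d x) :
    ∑ x, Real.negMulLog (d x) ≤
      (Fintype.card α) * Real.negMulLog ((∑ x, d x) / Fintype.card α) := by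
  set n : ℝ := (Fintype.card α : ℝ) with hn
  have hnpos : (0:ℝ) < n := by
    rw [hn]; exact_mod_cast lt_of_lt_of_le one_pos (by exact_mod_cast hcard)
  have hJ := Real.concaveOn_negMulLog.le_map_sum (t := Finset.univ)
      (w := fun _ : α => 1 / n) (p := d)
      (fun i _ => by positivity)
      (by simp [Finset.sum_const, hn]; field_simp)
      (fun i _ => Set.mem_Ici.2 (hd i))
  simp only [smul_eq_mul] at hJ
  have h1 : ∑ i, 1 / n * d i = (∑ x, d x) / n := by
    rw [← Finset.mul_sum]; ring
  rw [h1] at hJ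
  have h2 : ∑ i, 1 / n * Real.negMulLog (d i) = (∑ i, Real.negMulLog (d i)) / n := by
    rw [← Finset.mul_sum]; ring
  rw [h2] at hJ
  calc ∑ x, Real.negMulLog (d x) = n * ((∑ i, Real.negMulLog (d i)) / n) := by
        field_simp
    _ ≤ n * Real.negMulLog ((∑ x, d x) / n) := by
        exact mul_le_mul_of_nonneg_left hJ (le_of_lt hnpos)

end Aux


/-- Continuity of entropy (Csiszár–Körner Lemma 2.7): if the total variation
distance `θ` between pmfs `P` and `Q` satisfies `θ ≤ 1/4`, then
`|H(P) - H(Q)| ≤ -2θ·log₂(2θ/|X|)`. -/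
theorem stmt5 {α : Type*} [Fintype α] (hcard : 2 ≤ Fintype.card α)
    (P Q : α → ℝ)
    (hP0 : ∀ x, 0 ≤ P x) (hP1 : ∑ x, P x = 1)
    (hQ0 : ∀ x, 0 ≤ Q x) (hQ1 : ∑ x, Q x = 1)
    (θ : ℝ) (hθ : θ = (1 / 2) * ∑ x, |P x - Q x|) (hθ4 : θ ≤ 1 / 4) :
    |entropy P - entropy Q| ≤ -(2 * θ) * Real.logb 2 (2 * θ / Fintype.card α) := by
  set n : ℝ := (Fintype.card α : ℝ) with hn
  have hn2 : (2:ℝ) ≤ n := by rw [hn]; exact_mod_cast hcard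
  have hnpos : (0:ℝ) < n := by linarith
  set d : α → ℝ := fun x => |P x - Q x| with hdd
  have hd0 : ∀ x, 0 ≤ d x := fun x => abs_nonneg _
  have hτ : ∑ x, d x = 2 * θ := by rw [hθ, hdd]; ring
  have hθ0 : 0 ≤ θ := by
    rw [hθ]
    have : 0 ≤ ∑ x, |P x - Q x| := Finset.sum_nonneg fun x _ => abs_nonneg _
    linarith
  have hdle : ∀ x, d x ≤ 1/2 := by
    intro x
    have h1 : d x ≤ ∑ y, d y :=
      Finset.single_le_sum (f := d) (fun i _ => hd0 i) (Finset.mem_univ x)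
    rw [hτ] at h1; linarith
  have hP1x : ∀ x, P x ≤ 1 := by
    intro x
    rw [← hP1]
    exact Finset.single_le_sum (fun i _ => hP0 i) (Finset.mem_univ x)
  have hQ1x : ∀ x, Q x ≤ 1 := by
    intro x
    rw [← hQ1]
    exact Finset.single_le_sum (fun i _ => hQ0 i) (Finset.mem_univ x)
  have hlog2 : 0 < Real.log 2 := Real.log_pos (by norm_num)
  have hE : entropy P - entropy Q =
      ((∑ x, Real.negMulLog (P x)) - ∑ x, Real.negMulLog (Q x)) / Real.log 2 := by
    rw [entropy, entropy, entropy_eq_sum_negMulLog, entropy_eq_sum_negMulLog]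
    ring
  have hRHS : -(2 * θ) * Real.logb 2 (2 * θ / n) =
      (n * Real.negMulLog (2 * θ / n)) / Real.log 2 := by
    rw [Real.logb, Real.negMulLog]
    field_simp
  rw [hE, abs_div, abs_of_pos hlog2, hRHS]
  have hnum : |(∑ x, Real.negMulLog (P x)) - ∑ x, Real.negMulLog (Q x)| ≤
      n * Real.negMulLog (2 * θ / n) := by
    have step1 : |(∑ x, Real.negMulLog (P x)) - ∑ x, Real.negMulLog (Q x)| ≤
        ∑ x, Real.negMulLog (d x) := by
      rw [← Finset.sum_sub_distrib]
      refine (Finset.abs_sum_le_sum_abs _ _).trans ?_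
      apply Finset.sum_le_sum
      intro x _
      exact abs_negMulLog_sub (hP0 x) (hP1x x) (hQ0 x) (hQ1x x) (hdle x)
    have step2 := jensen_negMulLog (le_trans one_le_two hcard) d hd0
    rw [hτ, ← hn] at step2
    linarith
  gcongr
end

section
/- Let p̂ and p be two probability distributions on observations x_W such that there exist constants 0 < ε, ε₁ < 1 and a function S(x_W) ≥ 0 with (1-ε)/(1+ε₁)·S(x_W) ≤ p̂(x_W) ≤ (1+ε)/(1-ε₁)·S(x_W) for all x_W, and p(x_W) = S(x_W) + r(x_W) with r(x_W) ≥ 0 and Σ r(x_W) ≤ δ. Then the total variation distance satisfies V(p̂, p) ≤ (1/2)·max(ε+ε₁+ε·ε₁, (ε+ε₁)/(1-ε₁)) + δ/2 ≤ (ε + ε₁)/(1-ε₁) + δ. -/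
open Finset

/-- Abstract deniability bound: if `p̂` is sandwiched around a nonnegative
function `S` as `(1-ε)/(1+ε₁)·S ≤ p̂ ≤ (1+ε)/(1-ε₁)·S` and `p = S + r` with
`r ≥ 0`, `Σr ≤ δ`, then the total variation distance satisfies
`V(p̂,p) ≤ (1/2)·max(ε+ε₁+ε·ε₁, (ε+ε₁)/(1-ε₁)) + δ/2 ≤ (ε+ε₁)/(1-ε₁) + δ`. -/
theorem stmt11 {α : Type*} [Fintype α]
    (phat p S r : α → ℝ) (ε ε₁ δ : ℝ)
    (hε0 : 0 < ε) (hε1 : ε < 1) (hε₁0 : 0 < ε₁) (hε₁1 : ε₁ < 1)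
    (hphat0 : ∀ x, 0 ≤ phat x) (hphat1 : ∑ x, phat x = 1)
    (hp0 : ∀ x, 0 ≤ p x) (hp1 : ∑ x, p x = 1)
    (hS0 : ∀ x, 0 ≤ S x)
    (hsand : ∀ x, (1 - ε) / (1 + ε₁) * S x ≤ phat x ∧
      phat x ≤ (1 + ε) / (1 - ε₁) * S x)
    (hr : ∀ x, p x = S x + r x) (hr0 : ∀ x, 0 ≤ r x) (hrδ : ∑ x, r x ≤ δ) :
    (1 / 2) * (∑ x, |phat x - p x|) ≤
        (1 / 2) * max (ε + ε₁ + ε * ε₁) ((ε + ε₁) / (1 - ε₁)) + δ / 2 ∧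
      (1 / 2) * max (ε + ε₁ + ε * ε₁) ((ε + ε₁) / (1 - ε₁)) + δ / 2 ≤
        (ε + ε₁) / (1 - ε₁) + δ := by

  have h1ε₁ : (0:ℝ) < 1 - ε₁ := by linarith
  have h1ε₁' : (0:ℝ) < 1 + ε₁ := by linarith
  set k : ℝ := (ε + ε₁) / (1 - ε₁) with hkdef
  have hk : k * (1 - ε₁) = ε + ε₁ := div_mul_cancel₀ _ (ne_of_gt h1ε₁)
  have hk0 : 0 ≤ k := div_nonneg (by linarith) (le_of_lt h1ε₁)
  have hmax : max (ε + ε₁ + ε * ε₁) ((ε + ε₁) / (1 - ε₁)) = k := by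
    rw [max_eq_right]
    rw [le_div_iff₀ h1ε₁]
    nlinarith [sq_nonneg ε₁, mul_pos hε0 hε₁0]
  have hb : ∀ x, (1 + ε) / (1 - ε₁) * S x = S x + k * S x := by
    intro x
    have : (1 + ε) / (1 - ε₁) = 1 + k := by
      rw [eq_comm, eq_div_iff (ne_of_gt h1ε₁)]
      linarith [hk]
    rw [this]; ring
  have hc : ∀ x, S x - k * S x ≤ (1 - ε) / (1 + ε₁) * S x := by
    intro x
    have h : 1 - k ≤ (1 - ε) / (1 + ε₁) := by
      rw [le_div_iff₀ h1ε₁']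
      have : k * (1 + ε₁) ≥ k * (1 - ε₁) := by nlinarith
      nlinarith
    nlinarith [hS0 x, mul_le_mul_of_nonneg_right h (hS0 x)]
  have hpt : ∀ x, |phat x - p x| ≤ k * S x + r x := by
    intro x
    obtain ⟨hl, hu⟩ := hsand x
    rw [abs_le]
    constructor
    · have := hc x
      have := hr x
      have := hr0 x
      linarith
    · have := hb x
      have := hr x
      have := hr0 x
      linarith
  have hsum : ∑ x, |phat x - p x| ≤ k * (∑ x, S x) + ∑ x, r x := by
    rw [Finset.mul_sum, ← Finset.sum_add_distrib]
    exact Finset.sum_le_sum fun x _ => hpt x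
  have hSsum : ∑ x, S x = 1 - ∑ x, r x := by
    have : ∑ x, p x = ∑ x, S x + ∑ x, r x := by
      rw [← Finset.sum_add_distrib]
      exact Finset.sum_congr rfl fun x _ => hr x
    linarith [hp1 ▸ this]
  have hr0' : 0 ≤ ∑ x, r x := Finset.sum_nonneg fun x _ => hr0 x
  have hS1 : ∑ x, S x ≤ 1 := by rw [hSsum]; linarith
  have hkS : k * (∑ x, S x) ≤ k := by
    calc k * (∑ x, S x) ≤ k * 1 := by
          exact mul_le_mul_of_nonneg_left hS1 hk0
      _ = k := mul_one k
  constructor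
  · rw [hmax]
    linarith
  · rw [hmax]
    linarith
end

section
/- The reliable-deniable capacity of a multipath network, C_d = sup over distributions p on the alphabet X = {0,...,2^C - 1} whose marginal on every W ∈ 𝒲 equals the innocent marginal, of H(p), upper-bounds any achievable deniable rate: if a rate-R encoder with block length n satisfies the deniability constraints (the marginal induced distribution equals the innocent marginal on every W ∈ 𝒲) and Fano-reliability with error ε_n, then nR ≤ n·C_d + n·ε_n. -/
open Finset Real

/-- Gibbs' inequality: cross entropy dominates entropy. -/
lemma gibbs_aux {α : Type*} [Fintype α] (f g : α → ℝ)
    (hf0 : ∀ a, 0 ≤ f a) (hg0 : ∀ a, 0 ≤ g a)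
    (hsum : ∑ a, g a ≤ ∑ a, f a)
    (hfg : ∀ a, g a = 0 → f a = 0) :
    -∑ a, f a * Real.logb 2 (f a) ≤ -∑ a, f a * Real.logb 2 (g a) := by
  have hl2 : (0:ℝ) < Real.log 2 := Real.log_pos one_lt_two
  have key : ∀ a, f a * Real.logb 2 (g a) - f a * Real.logb 2 (f a)
      ≤ (g a - f a) / Real.log 2 := by
    intro a
    rcases eq_or_lt_of_le (hf0 a) with h | h
    · simp only [← h, zero_mul, sub_zero, sub_self]
      have : (0:ℝ) ≤ (g a - 0) / Real.log 2 := div_nonneg (by simpa using hg0 a) hl2.le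
      simpa using this
    · have hg : 0 < g a := by
        rcases eq_or_lt_of_le (hg0 a) with hg | hg
        · exact absurd (hfg a hg.symm) (by linarith)
        · exact hg
      have hlog : Real.log (g a / f a) ≤ g a / f a - 1 :=
        Real.log_le_sub_one_of_pos (div_pos hg h)
      have hmul : f a * Real.log (g a / f a) ≤ g a - f a := by
        have h1 : f a * (g a / f a - 1) = g a - f a := by field_simp
        nlinarith [mul_le_mul_of_nonneg_left hlog h.le]
      have heq : f a * Real.logb 2 (g a) - f a * Real.logb 2 (f a)
          = (f a * Real.log (g a / f a)) / Real.log 2 := by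
        rw [Real.log_div hg.ne' h.ne', Real.logb, Real.logb]
        ring
      rw [heq, div_le_div_iff_of_pos_right hl2]
      exact hmul
  have h2 : ∑ a, (f a * Real.logb 2 (g a) - f a * Real.logb 2 (f a))
      ≤ ∑ a, (g a - f a) / Real.log 2 := Finset.sum_le_sum fun a _ => key a
  rw [Finset.sum_sub_distrib, ← Finset.sum_div, Finset.sum_sub_distrib] at h2
  have h3 : (∑ a, g a - ∑ a, f a) / Real.log 2 ≤ 0 :=
    div_nonpos_of_nonpos_of_nonneg (by linarith) hl2.le
  linarith

/-- Entropy of a pmf is at most log of the alphabet size. -/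
lemma entropy_le_logb_card {α : Type*} [Fintype α] [Nonempty α] (p : α → ℝ)
    (h0 : ∀ a, 0 ≤ p a) (h1 : ∑ a, p a = 1) :
    entropy p ≤ Real.logb 2 (Fintype.card α) := by
  have hc : (0:ℝ) < Fintype.card α := by
    exact_mod_cast Fintype.card_pos
  have := gibbs_aux p (fun _ => (Fintype.card α : ℝ)⁻¹) h0
    (fun _ => by positivity)
    (by rw [h1, Finset.sum_const, Finset.card_univ, nsmul_eq_mul, mul_inv_cancel₀ hc.ne'])
    (fun a h => absurd h (by positivity))
  refine le_trans this (le_of_eq ?_)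
  rw [← Finset.sum_mul, h1, one_mul, Real.logb_inv]
  ring

/-- Summing over a product type restricted by a predicate on the second factor. -/
lemma sum_filter_prod {M X : Type*} [Fintype M] [Fintype X] (q : M × X → ℝ)
    (P : X → Prop) [DecidablePred P] :
    ∑ z ∈ Finset.univ.filter (fun z : M × X => P z.2), q z
      = ∑ x ∈ Finset.univ.filter P, ∑ m, q (m, x) := by
  rw [Finset.sum_filter, Finset.sum_filter, Fintype.sum_prod_type_right]
  refine Finset.sum_congr rfl fun x _ => ?_
  split <;> simp

/-- Converse for reliable-deniable communication over a multipath network with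
`C` unit-capacity links (per-symbol alphabet `Fin C → Bool`, of size `2^C`).
If the message `M` is uniform on `Nmsg = 2^{nR}` messages, the scheme is
Fano-reliable (`H(M|X) ≤ n·ε_n`), and each per-time-step marginal of the
transmitted codeword matches the innocent marginal `p^i` on every eavesdroppable
subset `W ∈ 𝒲`, then `nR = log₂ Nmsg ≤ n·C_d + n·ε_n`, where
`C_d = sup { H(p) : p_W = p^i_W for all W ∈ 𝒲 }`. -/
theorem stmt17 (C n Nmsg : ℕ) (hn : 0 < n) (hNmsg : 1 ≤ Nmsg)
    (𝒲 : Finset (Finset (Fin C)))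
    (pinn : (Fin C → Bool) → ℝ)
    (hpinn0 : ∀ s, 0 ≤ pinn s) (hpinn1 : ∑ s, pinn s = 1)
    (q : Fin Nmsg × (Fin n → Fin C → Bool) → ℝ)
    (hq0 : ∀ z, 0 ≤ q z) (hq1 : ∑ z, q z = 1)
    (huniform : ∀ m : Fin Nmsg, ∑ x, q (m, x) = 1 / Nmsg)
    (εn : ℝ)
    -- Fano reliability: H(M | X) ≤ n·ε_n
    (hfano : -∑ m, ∑ x, q (m, x) * Real.logb 2 (q (m, x) / ∑ m', q (m', x)) ≤ n * εn)
    -- deniability: every per-time-step marginal of X matches the innocent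
    -- marginal on every W ∈ 𝒲
    (hden : ∀ j : Fin n, ∀ W ∈ 𝒲, ∀ y : Fin C → Bool,
      (∑ z ∈ Finset.univ.filter
          (fun z : Fin Nmsg × (Fin n → Fin C → Bool) =>
            z.2 j ∈ Finset.univ.filter (fun s : Fin C → Bool => ∀ i ∈ W, s i = y i)), q z) =
        ∑ s ∈ Finset.univ.filter (fun s : Fin C → Bool => ∀ i ∈ W, s i = y i), pinn s) :
    Real.logb 2 Nmsg ≤
      n * sSup {h : ℝ | ∃ p : (Fin C → Bool) → ℝ,
          (∀ s, 0 ≤ p s) ∧ (∑ s, p s = 1) ∧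
          (∀ W ∈ 𝒲, ∀ y : Fin C → Bool,
            (∑ s ∈ Finset.univ.filter (fun s : Fin C → Bool => ∀ i ∈ W, s i = y i), p s) =
              ∑ s ∈ Finset.univ.filter (fun s : Fin C → Bool => ∀ i ∈ W, s i = y i), pinn s) ∧
          h = entropy p} +
        n * εn := by
  classical
  set S := {h : ℝ | ∃ p : (Fin C → Bool) → ℝ,
      (∀ s, 0 ≤ p s) ∧ (∑ s, p s = 1) ∧
      (∀ W ∈ 𝒲, ∀ y : Fin C → Bool,
        (∑ s ∈ Finset.univ.filter (fun s : Fin C → Bool => ∀ i ∈ W, s i = y i), p s) =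
          ∑ s ∈ Finset.univ.filter (fun s : Fin C → Bool => ∀ i ∈ W, s i = y i), pinn s) ∧
      h = entropy p} with hS
  have hN : (0:ℝ) < Nmsg := by exact_mod_cast hNmsg
  -- X-marginal of q
  set qX : (Fin n → Fin C → Bool) → ℝ := fun x => ∑ m, q (m, x) with hqXdef
  have hqX0 : ∀ x, 0 ≤ qX x := fun x => Finset.sum_nonneg fun m _ => hq0 _
  have hq_le_qX : ∀ z : Fin Nmsg × (Fin n → Fin C → Bool), q z ≤ qX z.2 := fun z =>
    Finset.single_le_sum (fun m _ => hq0 (m, z.2)) (Finset.mem_univ z.1)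
  have hq_le_inv : ∀ z : Fin Nmsg × (Fin n → Fin C → Bool), q z ≤ 1 / Nmsg := fun z => by
    calc q z = q (z.1, z.2) := rfl
      _ ≤ ∑ x', q (z.1, x') := Finset.single_le_sum (fun x' _ => hq0 _) (Finset.mem_univ z.2)
      _ = 1 / Nmsg := huniform z.1
  have hqX1 : ∑ x, qX x = 1 := by
    rw [hqXdef, ← hq1, Fintype.sum_prod_type_right]
  -- per-time-step marginals
  set pm : Fin n → (Fin C → Bool) → ℝ :=
    fun j s => ∑ x ∈ Finset.univ.filter (fun x : Fin n → Fin C → Bool => x j = s), qX x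
    with hpmdef
  have hpm0 : ∀ j s, 0 ≤ pm j s := fun j s => Finset.sum_nonneg fun x _ => hqX0 x
  have hpm1 : ∀ j, ∑ s, pm j s = 1 := fun j => by
    rw [hpmdef]
    rw [Finset.sum_fiberwise Finset.univ (fun x => x j) qX]
    exact hqX1
  have hqX_le_pm : ∀ j x, qX x ≤ pm j (x j) := fun j x =>
    Finset.single_le_sum (fun y _ => hqX0 y) (by simp)
  -- Step A: logb Nmsg ≤ H(M,X)
  have stepA : Real.logb 2 Nmsg ≤ -∑ z, q z * Real.logb 2 (q z) := by
    have key : ∀ z : Fin Nmsg × (Fin n → Fin C → Bool),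
        q z * Real.logb 2 Nmsg ≤ -(q z * Real.logb 2 (q z)) := by
      intro z
      rcases eq_or_lt_of_le (hq0 z) with h | h
      · simp [← h]
      · have h1 : q z * (Nmsg:ℝ) ≤ 1 := by
          have := hq_le_inv z
          rw [one_div] at this
          calc q z * (Nmsg:ℝ) ≤ (Nmsg:ℝ)⁻¹ * (Nmsg:ℝ) :=
                mul_le_mul_of_nonneg_right this hN.le
            _ = 1 := inv_mul_cancel₀ hN.ne'
        have hlog : Real.logb 2 (q z * Nmsg) ≤ 0 :=
          Real.logb_nonpos one_lt_two (by positivity) h1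
        rw [Real.logb_mul h.ne' hN.ne'] at hlog
        nlinarith [hlog, h]
    calc Real.logb 2 Nmsg = ∑ z, q z * Real.logb 2 Nmsg := by
          rw [← Finset.sum_mul, hq1, one_mul]
      _ ≤ ∑ z, -(q z * Real.logb 2 (q z)) := Finset.sum_le_sum fun z _ => key z
      _ = -∑ z, q z * Real.logb 2 (q z) := by rw [Finset.sum_neg_distrib]
  -- Step B: chain rule  H(M,X) = H(M|X) + H(X)
  have stepB : -∑ z, q z * Real.logb 2 (q z)
      = (-∑ z, q z * Real.logb 2 (q z / qX z.2)) + (-∑ x, qX x * Real.logb 2 (qX x)) := by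
    have h1 : ∀ z : Fin Nmsg × (Fin n → Fin C → Bool), q z * Real.logb 2 (q z)
        = q z * Real.logb 2 (q z / qX z.2) + q z * Real.logb 2 (qX z.2) := by
      intro z
      rcases eq_or_lt_of_le (hq0 z) with h | h
      · simp [← h]
      · have hx : 0 < qX z.2 := lt_of_lt_of_le h (hq_le_qX z)
        rw [Real.logb_div h.ne' hx.ne']
        ring
    have h2 : ∑ z, q z * Real.logb 2 (qX z.2) = ∑ x, qX x * Real.logb 2 (qX x) := by
      rw [Fintype.sum_prod_type_right]
      refine Finset.sum_congr rfl fun x _ => ?_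
      show ∑ m, q (m, x) * Real.logb 2 (qX x) = qX x * Real.logb 2 (qX x)
      rw [← Finset.sum_mul]
    have hsum1 : ∑ z, q z * Real.logb 2 (q z)
        = ∑ z, (q z * Real.logb 2 (q z / qX z.2) + q z * Real.logb 2 (qX z.2)) :=
      Finset.sum_congr rfl fun z _ => h1 z
    rw [hsum1, Finset.sum_add_distrib, h2]
    ring
  -- Fano: H(M|X) ≤ n ε
  have hcond : -∑ z, q z * Real.logb 2 (q z / qX z.2) ≤ (n:ℝ) * εn := by
    rw [Fintype.sum_prod_type]
    exact hfano
  -- Step D: subadditivity  H(X) ≤ ∑ⱼ H(pⱼ)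
  have hprod1 : ∑ x : Fin n → Fin C → Bool, ∏ j, pm j (x j) = 1 := by
    have h := Finset.prod_univ_sum (fun _ : Fin n => (Finset.univ : Finset (Fin C → Bool)))
      (fun j s => pm j s)
    rw [Fintype.piFinset_univ] at h
    rw [← h]
    rw [Finset.prod_congr rfl fun j _ => hpm1 j]
    simp
  have hsub : -∑ x, qX x * Real.logb 2 (qX x) ≤ ∑ j, entropy (pm j) := by
    have hg := gibbs_aux qX (fun x => ∏ j, pm j (x j)) hqX0
      (fun x => Finset.prod_nonneg fun j _ => hpm0 j (x j))
      (by rw [hprod1, hqX1])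
      (fun x hx => by
        rcases Finset.prod_eq_zero_iff.mp hx with ⟨j, -, hj⟩
        have := hqX_le_pm j x
        rw [hj] at this
        linarith [hqX0 x])
    refine hg.trans (le_of_eq ?_)
    have h1 : ∀ x, qX x * Real.logb 2 (∏ j, pm j (x j))
        = ∑ j, qX x * Real.logb 2 (pm j (x j)) := by
      intro x
      rcases eq_or_lt_of_le (hqX0 x) with h | h
      · simp [← h]
      · rw [Real.logb_prod Finset.univ (fun j => pm j (x j))
          (fun j _ => (lt_of_lt_of_le h (hqX_le_pm j x)).ne')]
        rw [Finset.mul_sum]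
    rw [Finset.sum_congr rfl fun x _ => h1 x, Finset.sum_comm]
    rw [neg_eq_iff_eq_neg, ← Finset.sum_neg_distrib]
    refine Finset.sum_congr rfl fun j _ => ?_
    have h2 : ∑ x, qX x * Real.logb 2 (pm j (x j))
        = ∑ s, pm j s * Real.logb 2 (pm j s) := by
      rw [← Finset.sum_fiberwise Finset.univ (fun x : Fin n → Fin C → Bool => x j)
        (fun x => qX x * Real.logb 2 (pm j (x j)))]
      refine Finset.sum_congr rfl fun s _ => ?_
      have hc : ∀ x ∈ Finset.univ.filter (fun x : Fin n → Fin C → Bool => x j = s),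
          qX x * Real.logb 2 (pm j (x j)) = qX x * Real.logb 2 (pm j s) := fun x hx => by
        rw [(Finset.mem_filter.mp hx).2]
      rw [Finset.sum_congr rfl hc, ← Finset.sum_mul]
    rw [h2, entropy, neg_neg]
  -- Step E: each marginal entropy is in S and bounded by sSup S
  have hbdd : BddAbove S := by
    refine ⟨Real.logb 2 (Fintype.card (Fin C → Bool)), ?_⟩
    rintro h ⟨p, h0, h1, -, rfl⟩
    exact entropy_le_logb_card p h0 h1
  have hmem : ∀ j, entropy (pm j) ∈ S := by
    intro j
    refine ⟨pm j, hpm0 j, hpm1 j, fun W hW y => ?_, rfl⟩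
    have hd := hden j W hW y
    rw [sum_filter_prod q (fun x => x j ∈ Finset.univ.filter
      (fun s : Fin C → Bool => ∀ i ∈ W, s i = y i))] at hd
    calc ∑ s ∈ Finset.univ.filter (fun s : Fin C → Bool => ∀ i ∈ W, s i = y i), pm j s
        = ∑ x ∈ Finset.univ.filter (fun x : Fin n → Fin C → Bool =>
            x j ∈ Finset.univ.filter (fun s : Fin C → Bool => ∀ i ∈ W, s i = y i)), qX x := by
          simp only [hpmdef]
          exact Finset.sum_fiberwise_eq_sum_filter _ _ _ _
      _ = _ := by simp only [hqXdef]; exact hd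
  have hsum_ent : ∑ j : Fin n, entropy (pm j) ≤ (n:ℝ) * sSup S := by
    calc ∑ j : Fin n, entropy (pm j) ≤ ∑ _j : Fin n, sSup S :=
          Finset.sum_le_sum fun j _ => le_csSup hbdd (hmem j)
      _ = (n:ℝ) * sSup S := by simp [mul_comm]
  linarith [stepA, stepB, hcond, hsub, hsum_ent]
end

section
/- For the reliable-deniable-hidable converse: if a scheme with uniform message M of rate R satisfies strong secrecy I(M; X_W) ≤ ε_sec for every W ∈ 𝒲 and Fano-reliability H(M | X) ≤ n·ε_n where X = (X_W, X_{W^c}), then nR ≤ min_{W ∈ 𝒲} H(X_{W^c} | X_W) + n·ε_n + ε_sec. -/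
open Finset Real

lemma stmt18_aux (a pM pX pW pMW : ℝ) (ha : 0 ≤ a) (hM : a ≤ pM) (hX : a ≤ pX)
    (hMW : a ≤ pMW) (hWge : pX ≤ pW) :
    a * Real.logb 2 (a / pX) + a * Real.logb 2 (pX / pW)
      ≤ a * Real.logb 2 pM + a * Real.logb 2 (pMW / (pM * pW)) := by
  rcases ha.eq_or_lt with h | h
  · simp [← h]
  · have hMp : 0 < pM := lt_of_lt_of_le h hM
    have hXp : 0 < pX := lt_of_lt_of_le h hX
    have hMWp : 0 < pMW := lt_of_lt_of_le h hMW
    have hWp : 0 < pW := lt_of_lt_of_le hXp hWge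
    rw [Real.logb_div h.ne' hXp.ne', Real.logb_div hXp.ne' hWp.ne',
      Real.logb_div hMWp.ne' (mul_pos hMp hWp).ne', Real.logb_mul hMp.ne' hWp.ne']
    have hlog : Real.logb 2 a ≤ Real.logb 2 pMW :=
      Real.logb_le_logb_of_le one_lt_two h hMW
    nlinarith [mul_le_mul_of_nonneg_left hlog ha]


/-- Converse for reliable-deniable-hidable communication: if the uniform message
`M` (over `Nmsg = 2^{nR}` messages) satisfies strong secrecy
`I(M; X_W) ≤ ε_sec` for every eavesdroppable subset `W ∈ 𝒲` and Fano-reliability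
`H(M|X) ≤ n·ε_n`, then `nR = log₂ Nmsg ≤ min_{W∈𝒲} H(X_{W^c}|X_W) + n·ε_n + ε_sec`.
Here `X_W` is the restriction of the codeword `X` to the links in `W`, realized
by summing over the equivalence classes `{x' : x' agrees with x on W}`, and
`H(X_{W^c}|X_W) = H(X) - H(X_W)` is written as
`-Σ_x q_X(x)·log₂(q_X(x)/q_{X_W}([x]_W))`. -/
theorem stmt18 (C n Nmsg : ℕ) (hn : 0 < n) (hNmsg : 1 ≤ Nmsg)
    (𝒲 : Finset (Finset (Fin C))) (h𝒲 : 𝒲.Nonempty)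
    (q : Fin Nmsg × (Fin n → Fin C → Bool) → ℝ)
    (hq0 : ∀ z, 0 ≤ q z) (hq1 : ∑ z, q z = 1)
    (huniform : ∀ m : Fin Nmsg, ∑ x, q (m, x) = 1 / Nmsg)
    (εn εsec : ℝ)
    -- Fano reliability: H(M | X) ≤ n·ε_n
    (hfano : -∑ m, ∑ x, q (m, x) * Real.logb 2 (q (m, x) / ∑ m', q (m', x)) ≤ n * εn)
    -- strong secrecy: I(M; X_W) ≤ ε_sec for every W ∈ 𝒲
    (hsec : ∀ W ∈ 𝒲,
      (∑ m, ∑ x : Fin n → Fin C → Bool,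
        q (m, x) * Real.logb 2
          ((∑ x' ∈ Finset.univ.filter
              (fun x' : Fin n → Fin C → Bool => ∀ j, ∀ i ∈ W, x' j i = x j i), q (m, x')) /
            ((∑ x', q (m, x')) *
              (∑ x' ∈ Finset.univ.filter
                (fun x' : Fin n → Fin C → Bool => ∀ j, ∀ i ∈ W, x' j i = x j i),
                  ∑ m', q (m', x'))))) ≤ εsec) :
    Real.logb 2 Nmsg ≤
      𝒲.inf' h𝒲 (fun W =>
        -∑ x : Fin n → Fin C → Bool,
          (∑ m, q (m, x)) * Real.logb 2
            ((∑ m, q (m, x)) /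
              (∑ x' ∈ Finset.univ.filter
                (fun x' : Fin n → Fin C → Bool => ∀ j, ∀ i ∈ W, x' j i = x j i),
                  ∑ m, q (m, x')))) +
        n * εn + εsec := by
  have hN0 : (0:ℝ) < Nmsg := by exact_mod_cast hNmsg
  have main : ∀ W ∈ 𝒲, Real.logb 2 Nmsg - n * εn - εsec ≤
      (fun W : Finset (Fin C) =>
        -∑ x : Fin n → Fin C → Bool,
          (∑ m, q (m, x)) * Real.logb 2
            ((∑ m, q (m, x)) /
              (∑ x' ∈ Finset.univ.filter
                (fun x' : Fin n → Fin C → Bool => ∀ j, ∀ i ∈ W, x' j i = x j i),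
                  ∑ m, q (m, x')))) W := by
    intro W hW
    simp only []
    set cls : (Fin n → Fin C → Bool) → Finset (Fin n → Fin C → Bool) :=
      fun x => Finset.univ.filter
        (fun x' : Fin n → Fin C → Bool => ∀ j, ∀ i ∈ W, x' j i = x j i) with hcls
    have hmemcls : ∀ x : Fin n → Fin C → Bool, x ∈ cls x := by
      intro x; simp [hcls]
    -- the pointwise sum inequality
    have key : ∑ m, ∑ x : Fin n → Fin C → Bool,
        (q (m, x) * Real.logb 2 (q (m, x) / ∑ m', q (m', x)) +
          q (m, x) * Real.logb 2 ((∑ m', q (m', x)) / (∑ x' ∈ cls x, ∑ m', q (m', x')))) ≤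
        ∑ m, ∑ x : Fin n → Fin C → Bool,
        (q (m, x) * Real.logb 2 (∑ x', q (m, x')) +
          q (m, x) * Real.logb 2
            ((∑ x' ∈ cls x, q (m, x')) /
              ((∑ x', q (m, x')) * (∑ x' ∈ cls x, ∑ m', q (m', x'))))) := by
      apply Finset.sum_le_sum
      intro m _
      apply Finset.sum_le_sum
      intro x _
      apply stmt18_aux
      · exact hq0 _
      · exact Finset.single_le_sum (fun x' _ => hq0 (m, x')) (Finset.mem_univ x)
      · exact Finset.single_le_sum (fun m' _ => hq0 (m', x)) (Finset.mem_univ m)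
      · exact Finset.single_le_sum (fun x' _ => hq0 (m, x')) (hmemcls x)
      · exact Finset.single_le_sum
          (fun x' _ => Finset.sum_nonneg (fun m' _ => hq0 (m', x'))) (hmemcls x)
    -- identify the pieces
    have hC : ∑ m, ∑ x : Fin n → Fin C → Bool,
        q (m, x) * Real.logb 2 (∑ x', q (m, x')) = -Real.logb 2 Nmsg := by
      have : ∀ m : Fin Nmsg, ∑ x : Fin n → Fin C → Bool,
          q (m, x) * Real.logb 2 (∑ x', q (m, x')) =
          (1 / Nmsg) * Real.logb 2 (1 / Nmsg) := by
        intro m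
        rw [← Finset.sum_mul, huniform m]
      rw [Finset.sum_congr rfl (fun m _ => this m), Finset.sum_const, Finset.card_univ,
        Fintype.card_fin, nsmul_eq_mul, one_div, Real.logb_inv]
      field_simp
    have hB : ∑ m, ∑ x : Fin n → Fin C → Bool,
        q (m, x) * Real.logb 2 ((∑ m', q (m', x)) / (∑ x' ∈ cls x, ∑ m', q (m', x'))) =
        ∑ x : Fin n → Fin C → Bool,
          (∑ m, q (m, x)) * Real.logb 2
            ((∑ m, q (m, x)) / (∑ x' ∈ cls x, ∑ m, q (m, x'))) := by
      rw [Finset.sum_comm]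
      exact Finset.sum_congr rfl (fun x _ => by rw [← Finset.sum_mul])
    have hsplit1 : ∀ (f g : Fin Nmsg → (Fin n → Fin C → Bool) → ℝ),
        ∑ m, ∑ x, (f m x + g m x) = (∑ m, ∑ x, f m x) + ∑ m, ∑ x, g m x := by
      intro f g
      simp [Finset.sum_add_distrib]
    rw [hsplit1, hsplit1, hC, hB] at key
    simp only [hcls] at key
    have hS := hsec W hW
    linarith [key, hfano, hS]
  have h := Finset.le_inf' h𝒲 _ main
  linarith
end
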